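/- arXiv:0710.3216 — 2 statements merged into one kernel-verified Lean document; each statement's English description precedes it below -/
import Mathlib

section
/- There exists a bijection φ : Y_β ≃ ∏_{i=1}^n Gr(β_i, ℂ^m), where Gr(k, ℂ^m) denotes the set of k-dimensional ℂ-subspaces of EuclideanSpace ℂ (Fin m), such that for every 1 ≤ i ≤ n−1 with β_i + β_{i+1} ≤ m, φ maps the subset X_β^i := {(L_•) ∈ Y_β : z(L_{i+1}) ≤ L_{i−1}} onto the subset A_β^i := {(l_1, …, l_n) : l_i ≤ (l_{i+1})ᗮ} of tuples whose i-th and (i+1)-st members are orthogonal. (This is the bijection underlying the paper's diffeomorphism Y_β ≅ ∏_i Gr(β_i, m) carrying X_β^i to A_β^i.) -/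
open Module

/-- `Vsp m` models `ℂ^m ⊗ z^{-1}ℂ[z^{-1}]`: finitely supported sequences of vectors in `ℂ^m`,
the index `n` corresponding to `z^{-(n+1)}`. -/
abbrev Vsp (m : ℕ) : Type := ℕ →₀ (Fin m → ℂ)

/-- The shift operator `z`: `(z f)(n) = f (n+1)`. -/
noncomputable def zmap (m : ℕ) : Vsp m →ₗ[ℂ] Vsp m :=
  Finsupp.lcomapDomain Nat.succ Nat.succ_injective

/-- `Yset m n β` is the set of chains `⊥ = L 0 ≤ L 1 ≤ ⋯ ≤ L n` of finite-dimensional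
subspaces of `V` with `finrank (L i) = β 1 + ⋯ + β i` and `z (L i) ≤ L (i-1)`. -/
def Yset (m n : ℕ) (β : Fin n → ℕ) : Set (Fin (n + 1) → Submodule ℂ (Vsp m)) :=
  {L | L 0 = ⊥ ∧ ∀ i : Fin n,
      L i.castSucc ≤ L i.succ ∧
      FiniteDimensional ℂ (L i.succ) ∧
      Module.finrank ℂ (L i.succ) = ∑ j ∈ Finset.Iic i, β j ∧
      Submodule.map (zmap m) (L i.succ) ≤ L i.castSucc}


noncomputable section

variable {m : ℕ}
abbrev Em (m : ℕ) := EuclideanSpace ℂ (Fin m)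
def toE : (Fin m → ℂ) ≃ₗ[ℂ] Em m := (WithLp.linearEquiv 2 ℂ (Fin m → ℂ)).symm
def Pm (a : Submodule ℂ (Em m)) : (Fin m → ℂ) →ₗ[ℂ] (Fin m → ℂ) :=
  toE.symm.toLinearMap ∘ₗ (a.subtype ∘ₗ (Submodule.orthogonalProjection a).toLinearMap) ∘ₗ toE.toLinearMap

def sig (m : ℕ) : Vsp m →ₗ[ℂ] Vsp m := Finsupp.lmapDomain (Fin m → ℂ) ℂ Nat.succ
def mapR (T : (Fin m → ℂ) →ₗ[ℂ] (Fin m → ℂ)) : Vsp m →ₗ[ℂ] Vsp m := Finsupp.mapRange.linearMap T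

lemma zmap_apply (f : Vsp m) (n : ℕ) : zmap m f n = f (n+1) := rfl
lemma mapR_apply (T) (f : Vsp m) (n : ℕ) : mapR T f n = T (f n) := rfl
lemma sig_apply_succ (f : Vsp m) (n : ℕ) : sig m f (n+1) = f n :=
  Finsupp.mapDomain_apply Nat.succ_injective f n
lemma sig_apply_zero (f : Vsp m) : sig m f 0 = 0 :=
  Finsupp.mapDomain_notin_range _ _ (by simp)

def Amap (a : Submodule ℂ (Em m)) : Vsp m →ₗ[ℂ] Vsp m :=
  mapR (LinearMap.id - Pm a) + (sig m) ∘ₗ mapR (Pm a)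
def Bmap (a : Submodule ℂ (Em m)) : Vsp m →ₗ[ℂ] Vsp m :=
  mapR (LinearMap.id - Pm a) + (zmap m) ∘ₗ mapR (Pm a)

lemma Amap_apply_zero (a) (f : Vsp m) : Amap a f 0 = f 0 - Pm a (f 0) := by
  simp [Amap, Finsupp.add_apply, mapR_apply, LinearMap.comp_apply, sig_apply_zero, LinearMap.sub_apply]
lemma Amap_apply_succ (a) (f : Vsp m) (n : ℕ) :
    Amap a f (n+1) = f (n+1) - Pm a (f (n+1)) + Pm a (f n) := by
  simp [Amap, Finsupp.add_apply, mapR_apply, LinearMap.comp_apply, sig_apply_succ, LinearMap.sub_apply]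
lemma Bmap_apply (a) (f : Vsp m) (n : ℕ) :
    Bmap a f n = f n - Pm a (f n) + Pm a (f (n+1)) := by
  simp [Bmap, Finsupp.add_apply, mapR_apply, LinearMap.comp_apply, zmap_apply, LinearMap.sub_apply]

lemma Pm_idem' (a : Submodule ℂ (Em m)) (w) : Pm a (Pm a w) = Pm a w := by
  have : (Submodule.orthogonalProjection a) ((a.subtype) ((Submodule.orthogonalProjection a) (toE w))) =
      (Submodule.orthogonalProjection a) (toE w) := Submodule.orthogonalProjection_mem_subspace_eq_self _
  simp [Pm, this, Submodule.starProjection_eq_self_iff.2 (Submodule.starProjection_apply_mem _ _)]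

lemma Bmap_Amap (a : Submodule ℂ (Em m)) : Bmap a ∘ₗ Amap a = LinearMap.id := by
  apply LinearMap.ext; intro f
  refine Finsupp.ext fun n => ?_
  rw [LinearMap.comp_apply, LinearMap.id_apply, Bmap_apply]
  cases n with
  | zero =>
    rw [Amap_apply_zero, Amap_apply_succ]
    simp only [map_sub, map_add, Pm_idem']
    abel
  | succ k =>
    rw [Amap_apply_succ, Amap_apply_succ]
    simp only [map_sub, map_add, Pm_idem']
    abel

lemma zmap_Bmap (a : Submodule ℂ (Em m)) : zmap m ∘ₗ Bmap a = Bmap a ∘ₗ zmap m := by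
  apply LinearMap.ext; intro f
  ext n
  simp [LinearMap.comp_apply, zmap_apply, Bmap_apply]

def emb0 : (Em m) →ₗ[ℂ] Vsp m := Finsupp.lsingle 0 ∘ₗ toE.symm.toLinearMap

lemma emb0_injective : Function.Injective (emb0 (m := m)) := by
  intro x y h
  have := congrArg (fun f : Vsp m => f 0) h
  simpa [emb0, Finsupp.single_eq_same] using (toE (m := m)).symm.injective (by simpa [emb0] using this)

lemma emb0_apply (v : Em m) (n : ℕ) : emb0 v n = if n = 0 then toE.symm v else 0 := by
  simp [emb0, Finsupp.single_apply, eq_comm]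

lemma ker_zmap : LinearMap.ker (zmap m) = LinearMap.range (emb0 (m := m)) := by
  ext f
  constructor
  · intro hf
    have h : ∀ n, f (n+1) = 0 := fun n => by
      have := congrArg (fun g : Vsp m => g n) (LinearMap.mem_ker.1 hf); simpa [zmap_apply] using this
    refine ⟨toE (f 0), ?_⟩
    ext n
    cases n with
    | zero => simp [emb0_apply]
    | succ k => simp [emb0_apply, h k]
  · rintro ⟨v, rfl⟩
    apply LinearMap.mem_ker.2
    ext n
    simp [zmap_apply, emb0_apply]

lemma Pm_eq_self {a : Submodule ℂ (Em m)} {w : Fin m → ℂ} (h : toE w ∈ a) : Pm a w = w := by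
  simp [Pm, Submodule.coe_orthogonalProjectionOnto_apply, Submodule.starProjection_eq_self_iff.2 h]
lemma Pm_eq_zero_iff {a : Submodule ℂ (Em m)} {w : Fin m → ℂ} : Pm a w = 0 ↔ toE w ∈ aᗮ := by
  rw [Pm]
  simp only [LinearMap.comp_apply, LinearEquiv.coe_coe, ContinuousLinearMap.coe_coe]
  rw [show (0 : Fin m → ℂ) = toE.symm 0 by simp, (toE (m := m)).symm.injective.eq_iff]
  simp [← Submodule.orthogonalProjectionOnto_eq_zero_iff, Submodule.coe_eq_zero]
  exact Submodule.coe_eq_zero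
lemma Pm_mem (a : Submodule ℂ (Em m)) (w : Fin m → ℂ) : toE (Pm a w) ∈ a := by
  simp [Pm]
lemma sub_Pm_mem (a : Submodule ℂ (Em m)) (w : Fin m → ℂ) : toE (w - Pm a w) ∈ aᗮ := by
  simpa [Pm] using Submodule.sub_starProjection_mem_orthogonal (K := a) (toE w)

lemma ker_Bmap (a : Submodule ℂ (Em m)) :
    LinearMap.ker (Bmap a) = Submodule.map (emb0 (m := m)) a := by
  ext f
  constructor
  · intro hf
    have hB : ∀ n, f n - Pm a (f n) + Pm a (f (n+1)) = 0 := fun n => by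
      have := congrArg (fun g : Vsp m => g n) (LinearMap.mem_ker.1 hf)
      simpa [Bmap_apply] using this
    -- separate components
    have hQ : ∀ n, f n - Pm a (f n) = 0 ∧ Pm a (f (n+1)) = 0 := by
      intro n
      have h1 : toE (f n - Pm a (f n)) ∈ aᗮ := sub_Pm_mem a (f n)
      have h2 : toE (f n - Pm a (f n)) = toE (-(Pm a (f (n+1)))) := by
        congr 1
        have := hB n
        linear_combination (norm := abel) this
      have h3 : toE (f n - Pm a (f n)) ∈ a := by
        rw [h2]; exact Submodule.neg_mem _ (Pm_mem a _)
      have h4 : toE (f n - Pm a (f n)) = 0 :=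
        Submodule.disjoint_def.1 (Submodule.orthogonal_disjoint a) _ h3 h1
      have h5 : f n - Pm a (f n) = 0 := by
        apply toE.injective; simpa using h4
      refine ⟨h5, ?_⟩
      have := hB n; rw [h5, zero_add] at this; exact this
    have hfsucc : ∀ n, f (n+1) = 0 := by
      intro n
      have := (hQ (n+1)).1
      have h2 := (hQ n).2
      rw [h2, sub_zero] at this
      exact this
    refine ⟨toE (f 0), ?_, ?_⟩
    · have h0 := (hQ 0).1
      have : Pm a (f 0) = f 0 := by rw [sub_eq_zero] at h0; exact h0.symm
      rw [← this]; exact Pm_mem a _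
    · ext n
      cases n with
      | zero => simp [emb0_apply]
      | succ k => simp [emb0_apply, hfsucc k]
  · rintro ⟨v, hv, rfl⟩
    apply LinearMap.mem_ker.2
    refine Finsupp.ext fun n => ?_
    have he : Pm a (toE.symm v) = toE.symm v := Pm_eq_self (by simpa using hv)
    cases n with
    | zero => simp [Bmap_apply, emb0_apply, he]
    | succ k => simp [Bmap_apply, emb0_apply]

def Bcomp (l : ℕ → Submodule ℂ (Em m)) : ℕ → (Vsp m →ₗ[ℂ] Vsp m)
  | 0 => LinearMap.id
  | (k+1) => Bmap (l k) ∘ₗ Bcomp l k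

def Acomp (l : ℕ → Submodule ℂ (Em m)) : ℕ → (Vsp m →ₗ[ℂ] Vsp m)
  | 0 => LinearMap.id
  | (k+1) => Acomp l k ∘ₗ Amap (l k)

lemma Bcomp_Acomp (l : ℕ → Submodule ℂ (Em m)) (k : ℕ) :
    Bcomp l k ∘ₗ Acomp l k = LinearMap.id := by
  induction k with
  | zero => rfl
  | succ k ih =>
    show (Bmap (l k) ∘ₗ Bcomp l k) ∘ₗ (Acomp l k ∘ₗ Amap (l k)) = LinearMap.id
    rw [LinearMap.comp_assoc, ← LinearMap.comp_assoc (Amap (l k)), ih, LinearMap.id_comp, Bmap_Amap]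

lemma Bcomp_Acomp_apply (l : ℕ → Submodule ℂ (Em m)) (k : ℕ) (x : Vsp m) :
    Bcomp l k (Acomp l k x) = x := by
  have := congrArg (fun T : Vsp m →ₗ[ℂ] Vsp m => T x) (Bcomp_Acomp l k)
  simpa using this

lemma Acomp_injective (l : ℕ → Submodule ℂ (Em m)) (k : ℕ) :
    Function.Injective (Acomp l k) := by
  intro x y h
  have := congrArg (Bcomp l k) h
  rwa [Bcomp_Acomp_apply, Bcomp_Acomp_apply] at this

lemma zmap_Bcomp (l : ℕ → Submodule ℂ (Em m)) (k : ℕ) :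
    zmap m ∘ₗ Bcomp l k = Bcomp l k ∘ₗ zmap m := by
  induction k with
  | zero => rfl
  | succ k ih =>
    show zmap m ∘ₗ (Bmap (l k) ∘ₗ Bcomp l k) = (Bmap (l k) ∘ₗ Bcomp l k) ∘ₗ zmap m
    rw [← LinearMap.comp_assoc, zmap_Bmap, LinearMap.comp_assoc, ih, LinearMap.comp_assoc]

lemma Bcomp_congr {l l' : ℕ → Submodule ℂ (Em m)} {k : ℕ} (h : ∀ j < k, l j = l' j) :
    Bcomp l k = Bcomp l' k := by
  induction k with
  | zero => rfl
  | succ k ih =>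
    show Bmap (l k) ∘ₗ Bcomp l k = Bmap (l' k) ∘ₗ Bcomp l' k
    rw [h k (by omega), ih (fun j hj => h j (by omega))]

lemma Acomp_congr {l l' : ℕ → Submodule ℂ (Em m)} {k : ℕ} (h : ∀ j < k, l j = l' j) :
    Acomp l k = Acomp l' k := by
  induction k with
  | zero => rfl
  | succ k ih =>
    show Acomp l k ∘ₗ Amap (l k) = Acomp l' k ∘ₗ Amap (l' k)
    rw [h k (by omega), ih (fun j hj => h j (by omega))]

/-- general kernel-of-composite lemma -/
lemma ker_comp_eq {V : Type*} [AddCommGroup V] [Module ℂ V] (f f' g : V →ₗ[ℂ] V)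
    (hf : f ∘ₗ f' = LinearMap.id) :
    LinearMap.ker (g ∘ₗ f) = LinearMap.ker f ⊔ Submodule.map f' (LinearMap.ker g) := by
  have hff' : ∀ x, f (f' x) = x := fun x => by
    have := congrArg (fun T : V →ₗ[ℂ] V => T x) hf; simpa using this
  ext x
  constructor
  · intro hx
    have hgfx : g (f x) = 0 := hx
    have h1 : x - f' (f x) ∈ LinearMap.ker f := by
      simp [LinearMap.mem_ker, map_sub, hff']
    have h2 : f' (f x) ∈ Submodule.map f' (LinearMap.ker g) := ⟨f x, hgfx, rfl⟩
    have : x = (x - f' (f x)) + f' (f x) := by abel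
    rw [this]
    exact Submodule.add_mem _ (Submodule.mem_sup_left h1) (Submodule.mem_sup_right h2)
  · intro hx
    refine (sup_le ?_ ?_ : _ ⊔ _ ≤ LinearMap.ker (g ∘ₗ f)) hx
    · intro y hy
      simp only [LinearMap.mem_ker, LinearMap.comp_apply] at *
      rw [hy, map_zero]
    · rintro y ⟨w, hw, rfl⟩
      simp only [LinearMap.mem_ker, LinearMap.comp_apply] at *
      rw [hff', hw]

lemma ker_Bcomp_succ (l : ℕ → Submodule ℂ (Em m)) (k : ℕ) :
    LinearMap.ker (Bcomp l (k+1)) =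
      LinearMap.ker (Bcomp l k) ⊔ Submodule.map (Acomp l k ∘ₗ emb0) (l k) := by
  have h1 : Bcomp l (k+1) = Bmap (l k) ∘ₗ Bcomp l k := rfl
  -- need ker (Bmap l k ∘ Bcomp l k) with f := Bcomp, f' := Acomp
  rw [h1, ker_comp_eq _ (Acomp l k) _ (Bcomp_Acomp l k), ker_Bmap, Submodule.map_comp]

lemma ker_Bmap_le_ker_zmap (a : Submodule ℂ (Em m)) :
    LinearMap.ker (Bmap a) ≤ LinearMap.ker (zmap m) := by
  rw [ker_Bmap, ker_zmap]
  rintro x ⟨v, hv, rfl⟩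
  exact ⟨v, rfl⟩

lemma zmap_ker_Bcomp (l : ℕ → Submodule ℂ (Em m)) (k : ℕ) :
    Submodule.map (zmap m) (LinearMap.ker (Bcomp l (k+1))) ≤ LinearMap.ker (Bcomp l k) := by
  rintro x ⟨y, hy, rfl⟩
  have h1 : Bmap (l k) (Bcomp l k y) = 0 := hy
  have h2 : Bcomp l k y ∈ LinearMap.ker (zmap m) :=
    ker_Bmap_le_ker_zmap (l k) h1
  show Bcomp l k (zmap m y) = 0
  have := congrArg (fun T : Vsp m →ₗ[ℂ] Vsp m => T y) (zmap_Bcomp l k)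
  simp only [LinearMap.comp_apply] at this
  rw [← this]
  exact h2

lemma finrank_map_inj {V W : Type*} [AddCommGroup V] [Module ℂ V] [AddCommGroup W] [Module ℂ W]
    (f : V →ₗ[ℂ] W) (hf : Function.Injective f) (p : Submodule ℂ V) :
    finrank ℂ (Submodule.map f p) = finrank ℂ p :=
  (LinearEquiv.finrank_eq (Submodule.equivMapOfInjective f hf p)).symm

lemma finrank_ker_Bcomp (l : ℕ → Submodule ℂ (Em m)) (k : ℕ) :
    FiniteDimensional ℂ (LinearMap.ker (Bcomp l k)) ∧
      finrank ℂ (LinearMap.ker (Bcomp l k)) = ∑ j ∈ Finset.range k, finrank ℂ (l j) := by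
  induction k with
  | zero =>
    constructor
    · rw [show Bcomp l 0 = LinearMap.id from rfl, LinearMap.ker_id]
      infer_instance
    · rw [show Bcomp l 0 = LinearMap.id from rfl, LinearMap.ker_id]
      simp
  | succ k ih =>
    obtain ⟨ihfd, ihrk⟩ := ih
    rw [ker_Bcomp_succ]
    have hinj : Function.Injective (Acomp l k ∘ₗ emb0 (m := m)) := by
      intro x y h
      exact emb0_injective (Acomp_injective l k h)
    have hfd2 : FiniteDimensional ℂ (Submodule.map (Acomp l k ∘ₗ emb0) (l k)) := by
      have : FiniteDimensional ℂ (l k) := inferInstance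
      exact Module.Finite.map _ _
    have hdisj : LinearMap.ker (Bcomp l k) ⊓ Submodule.map (Acomp l k ∘ₗ emb0) (l k) = ⊥ := by
      rw [Submodule.eq_bot_iff]
      rintro x ⟨hx1, v, hv, rfl⟩
      have h0 : Bcomp l k (Acomp l k (emb0 v)) = 0 := hx1
      rw [Bcomp_Acomp_apply] at h0
      show Acomp l k (emb0 v) = 0
      rw [h0, map_zero]
    constructor
    · infer_instance
    · have := Submodule.finrank_sup_add_finrank_inf_eq
        (LinearMap.ker (Bcomp l k)) (Submodule.map (Acomp l k ∘ₗ emb0) (l k))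
      rw [hdisj] at this
      simp only [finrank_bot, add_zero] at this
      rw [this, ihrk, finrank_map_inj _ hinj, Finset.sum_range_succ]

lemma map_ker_bot {V : Type*} [AddCommGroup V] [Module ℂ V] (f : V →ₗ[ℂ] V) :
    Submodule.map f (LinearMap.ker f) = ⊥ := by
  rw [Submodule.eq_bot_iff]
  rintro x ⟨y, hy, rfl⟩
  exact hy

lemma map_Bcomp_ker_succ (l : ℕ → Submodule ℂ (Em m)) (k : ℕ) :
    Submodule.map (Bcomp l k) (LinearMap.ker (Bcomp l (k+1))) = LinearMap.ker (Bmap (l k)) := by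
  rw [ker_Bcomp_succ, Submodule.map_sup, map_ker_bot, ← Submodule.map_comp, bot_sup_eq, ker_Bmap]
  have : (Bcomp l k ∘ₗ Acomp l k ∘ₗ emb0) = emb0 (m := m) := by
    rw [← LinearMap.comp_assoc, Bcomp_Acomp, LinearMap.id_comp]
  rw [this]

lemma map_Bcomp_ker_two (l : ℕ → Submodule ℂ (Em m)) (k : ℕ) :
    Submodule.map (Bcomp l k) (LinearMap.ker (Bcomp l (k+2))) =
      LinearMap.ker (Bmap (l (k+1)) ∘ₗ Bmap (l k)) := by
  have h2 : LinearMap.ker (Bcomp l (k+2)) =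
      LinearMap.ker (Bcomp l (k+1)) ⊔ Submodule.map (Acomp l (k+1) ∘ₗ emb0) (l (k+1)) :=
    ker_Bcomp_succ l (k+1)
  have h1 : LinearMap.ker (Bcomp l (k+1)) =
      LinearMap.ker (Bcomp l k) ⊔ Submodule.map (Acomp l k ∘ₗ emb0) (l k) :=
    ker_Bcomp_succ l k
  rw [h2, h1, Submodule.map_sup, Submodule.map_sup, map_ker_bot, bot_sup_eq]
  rw [ker_comp_eq _ (Amap (l k)) _ (Bmap_Amap (l k)), ker_Bmap, ker_Bmap]
  rw [← Submodule.map_comp, ← Submodule.map_comp]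
  congr 1
  · rw [← LinearMap.comp_assoc, Bcomp_Acomp, LinearMap.id_comp]
  · have h3 : Acomp l (k+1) = Acomp l k ∘ₗ Amap (l k) := rfl
    rw [h3]
    rw [show ((Bcomp l k ∘ₗ (Acomp l k ∘ₗ Amap (l k)) ∘ₗ emb0)) =
      ((Bcomp l k ∘ₗ Acomp l k) ∘ₗ (Amap (l k) ∘ₗ emb0)) by
        rw [LinearMap.comp_assoc]; rw [LinearMap.comp_assoc],
      Bcomp_Acomp, LinearMap.id_comp]
    rw [Submodule.map_comp]

section
variable {n : ℕ}

def bx (n : ℕ) (β : Fin n → ℕ) : ℕ → ℕ := fun j => if h : j < n then β ⟨j, h⟩ else 0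

lemma sum_Iic_eq (β : Fin n → ℕ) (i : Fin n) :
    ∑ j ∈ Finset.Iic i, β j = ∑ j ∈ Finset.range (i.1+1), bx n β j := by
  have h1 : (Finset.Iic i).map Fin.valEmbedding = Finset.range (i.1+1) := by
    ext j
    simp only [Finset.mem_map, Finset.mem_Iic, Fin.valEmbedding_apply, Finset.mem_range,
      Nat.lt_succ_iff]
    constructor
    · rintro ⟨a, ha, rfl⟩; exact ha
    · intro hj; exact ⟨⟨j, lt_of_le_of_lt hj i.2⟩, by simpa [Fin.le_def] using hj, rfl⟩
  rw [← h1, Finset.sum_map]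
  apply Finset.sum_congr rfl
  intro j _
  simp [bx, j.2]
end

section
variable {n : ℕ} (β : Fin n → ℕ)

def Grt (m : ℕ) (β : Fin n → ℕ) :=
  (i : Fin n) → {a : Submodule ℂ (Em m) // Module.finrank ℂ a = β i}

def extl (l : Grt m β) : ℕ → Submodule ℂ (Em m) :=
  fun j => if h : j < n then (l ⟨j, h⟩).1 else ⊥

lemma finrank_extl (l : Grt m β) (j : ℕ) : finrank ℂ (extl β l j) = bx n β j := by
  by_cases h : j < n
  · rw [extl, bx]
    rw [dif_pos h, dif_pos h]
    exact (l ⟨j, h⟩).2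
  · rw [extl, bx]
    rw [dif_neg h, dif_neg h]
    exact finrank_bot ℂ _

lemma ker_Bcomp_mono (l : ℕ → Submodule ℂ (Em m)) (k : ℕ) :
    LinearMap.ker (Bcomp l k) ≤ LinearMap.ker (Bcomp l (k+1)) := by
  intro x hx
  show Bmap (l k) (Bcomp l k x) = 0
  rw [show Bcomp l k x = 0 from hx, map_zero]

lemma psi_mem (l : Grt m β) :
    (fun i : Fin (n+1) => LinearMap.ker (Bcomp (extl β l) i.1)) ∈ Yset m n β := by
  constructor
  · show LinearMap.ker (Bcomp (extl β l) 0) = ⊥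
    rw [show Bcomp (extl β l) 0 = LinearMap.id from rfl, LinearMap.ker_id]
  · intro i
    refine ⟨ker_Bcomp_mono _ _, (finrank_ker_Bcomp _ _).1, ?_, zmap_ker_Bcomp _ _⟩
    show finrank ℂ (LinearMap.ker (Bcomp (extl β l) (i.1+1))) = _
    rw [(finrank_ker_Bcomp (extl β l) (i.1+1)).2, sum_Iic_eq β i]
    exact Finset.sum_congr rfl fun j _ => finrank_extl β l j

def psi (l : Grt m β) : ↥(Yset m n β) :=
  ⟨fun i : Fin (n+1) => LinearMap.ker (Bcomp (extl β l) i.1), psi_mem β l⟩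

lemma psi_injective : Function.Injective (psi (m := m) β) := by
  intro l l' h
  have hker : ∀ i : ℕ, i ≤ n →
      LinearMap.ker (Bcomp (extl β l) i) = LinearMap.ker (Bcomp (extl β l') i) := by
    intro i hi
    have := congrFun (congrArg Subtype.val h) ⟨i, by omega⟩
    exact this
  have hext : ∀ k, k < n → ∀ j, j ≤ k → extl β l j = extl β l' j := by
    intro k
    induction k with
    | zero =>
      intro hk j hj
      interval_cases j
      have h1 := map_Bcomp_ker_succ (extl β l) 0
      have h2 := map_Bcomp_ker_succ (extl β l') 0
      rw [show Bcomp (extl β l) 0 = LinearMap.id from rfl] at h1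
      rw [show Bcomp (extl β l') 0 = LinearMap.id from rfl] at h2
      rw [Submodule.map_id] at h1 h2
      rw [hker 1 (by omega)] at h1
      rw [h2] at h1
      rw [ker_Bmap, ker_Bmap] at h1
      exact (Submodule.map_injective_of_injective emb0_injective h1).symm
    | succ k ih =>
      intro hk j hj
      rcases Nat.lt_or_ge j (k+1) with hj' | hj'
      · exact ih (by omega) j (by omega)
      · have hjeq : j = k + 1 := by omega
        subst hjeq
        have hBeq : Bcomp (extl β l) (k+1) = Bcomp (extl β l') (k+1) :=
          Bcomp_congr (fun j' hj' => ih (by omega) j' (by omega))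
        have h1 := map_Bcomp_ker_succ (extl β l) (k+1)
        have h2 := map_Bcomp_ker_succ (extl β l') (k+1)
        rw [hBeq, hker (k+2) (by omega)] at h1
        rw [h1, ker_Bmap, ker_Bmap] at h2
        exact Submodule.map_injective_of_injective emb0_injective h2
  funext i
  apply Subtype.ext
  have := hext i.1 i.2 i.1 le_rfl
  rw [extl, extl, dif_pos i.2, dif_pos i.2] at this
  simpa using this

def extract : Vsp m →ₗ[ℂ] Em m := toE.toLinearMap ∘ₗ Finsupp.lapply 0

lemma emb0_extract {x : Vsp m} (hx : x ∈ LinearMap.range (emb0 (m := m))) :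
    emb0 (extract x) = x := by
  obtain ⟨v, rfl⟩ := hx
  show emb0 (toE (emb0 v 0)) = emb0 v
  congr 1
  rw [emb0_apply]
  simp

lemma map_emb0_extract {S : Submodule ℂ (Vsp m)} (hS : S ≤ LinearMap.range (emb0 (m := m))) :
    Submodule.map (emb0 (m := m)) (Submodule.map (extract (m := m)) S) = S := by
  ext x
  constructor
  · rintro ⟨y, ⟨x', hx', rfl⟩, rfl⟩
    rw [emb0_extract (hS hx')]
    exact hx'
  · intro hx
    exact ⟨extract x, ⟨x, hx, rfl⟩, emb0_extract (hS hx)⟩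

lemma psi_surjective : Function.Surjective (psi (m := m) β) := by
  rintro ⟨L, hL0, hLs⟩
  set Lx : ℕ → Submodule ℂ (Vsp m) := fun i => L ⟨min i n, by omega⟩ with hLx
  have Lx_eq : ∀ i, (hi : i ≤ n) → Lx i = L ⟨i, by omega⟩ := by
    intro i hi
    simp only [hLx]
    congr 1
    exact Fin.ext (by simp [min_eq_left hi])
  have key : ∀ k, k ≤ n → ∃ l : ℕ → Submodule ℂ (Em m),
      (∀ j, k ≤ j → l j = ⊥) ∧ (∀ j, j < k → finrank ℂ (l j) = bx n β j) ∧
      (∀ i, i ≤ k → LinearMap.ker (Bcomp l i) = Lx i) := by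
    intro k
    induction k with
    | zero =>
      intro _
      refine ⟨fun _ => ⊥, fun _ _ => rfl, fun j hj => by omega, ?_⟩
      intro i hi
      interval_cases i
      rw [show Bcomp (fun _ => (⊥ : Submodule ℂ (Em m))) 0 = LinearMap.id from rfl,
        LinearMap.ker_id, Lx_eq 0 (by omega)]
      rw [show (⟨0, by omega⟩ : Fin (n+1)) = 0 from rfl]
      exact hL0.symm
    | succ k ih =>
      intro hk1
      obtain ⟨l, hjunk, hrk, hker⟩ := ih (by omega)
      have hkn : k < n := by omega
      set S := Submodule.map (Bcomp l k) (Lx (k+1)) with hS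
      have hSr : S ≤ LinearMap.range (emb0 (m := m)) := by
        rintro x ⟨y, hy, rfl⟩
        rw [← ker_zmap, LinearMap.mem_ker]
        have hz : zmap m y ∈ Lx k := by
          have hcond := (hLs ⟨k, hkn⟩).2.2.2
          have : zmap m y ∈ L (⟨k, hkn⟩ : Fin n).castSucc := by
            apply hcond
            exact ⟨y, by rwa [Lx_eq (k+1) (by omega)] at hy, rfl⟩
          rwa [Lx_eq k (by omega)]
        have hcomm := congrArg (fun T : Vsp m →ₗ[ℂ] Vsp m => T y) (zmap_Bcomp l k)
        simp only [LinearMap.comp_apply] at hcomm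
        rw [hcomm]
        rw [← hker k (by omega)] at hz
        exact hz
      set a := Submodule.map (extract (m := m)) S with ha
      have hembS : Submodule.map (emb0 (m := m)) a = S := map_emb0_extract hSr
      set l' := Function.update l k a with hl'
      have hl'lt : ∀ j, j < k → l' j = l j := fun j hj =>
        Function.update_of_ne (by omega) _ _
      have hl'k : l' k = a := Function.update_self _ _ _
      have hBsame : ∀ i, i ≤ k → Bcomp l' i = Bcomp l i :=
        fun i hi => Bcomp_congr (fun j hj => (hl'lt j (by omega)))
      have hkerk1 : LinearMap.ker (Bcomp l' (k+1)) = Lx (k+1) := by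
        have hmono : Lx k ≤ Lx (k+1) := by
          rw [Lx_eq k (by omega), Lx_eq (k+1) (by omega)]
          exact (hLs ⟨k, hkn⟩).1
        have e1 : Bcomp l' (k+1) = Bmap a ∘ₗ Bcomp l k := by
          show Bmap (l' k) ∘ₗ Bcomp l' k = _
          rw [hl'k, hBsame k le_rfl]
        rw [e1, ker_comp_eq _ (Acomp l k) _ (Bcomp_Acomp l k), ker_Bmap, hembS,
          hker k (by omega)]
        apply le_antisymm
        · apply sup_le hmono
          rintro x ⟨y, ⟨w, hw, rfl⟩, rfl⟩
          have hd : Acomp l k (Bcomp l k w) - w ∈ Lx k := by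
            rw [← hker k (by omega)]
            show Bcomp l k _ = 0
            rw [map_sub, Bcomp_Acomp_apply, sub_self]
          have : Acomp l k (Bcomp l k w) = w + (Acomp l k (Bcomp l k w) - w) := by abel
          rw [this]
          exact Submodule.add_mem _ hw (hmono hd)
        · intro x hx
          have hd : x - Acomp l k (Bcomp l k x) ∈ Lx k := by
            rw [← hker k (by omega)]
            show Bcomp l k _ = 0
            rw [map_sub, Bcomp_Acomp_apply, sub_self]
          have hxx : x = (x - Acomp l k (Bcomp l k x)) + Acomp l k (Bcomp l k x) := by abel
          rw [hxx]
          exact Submodule.add_mem _ (Submodule.mem_sup_left hd)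
            (Submodule.mem_sup_right ⟨Bcomp l k x, ⟨x, hx, rfl⟩, rfl⟩)
      have hfinS : finrank ℂ a = bx n β k := by
        have h1 : finrank ℂ (Lx (k+1)) = ∑ j ∈ Finset.range (k+1), finrank ℂ (l' j) := by
          rw [← hkerk1]
          exact (finrank_ker_Bcomp l' (k+1)).2
        have h2 : finrank ℂ (Lx (k+1)) = ∑ j ∈ Finset.range (k+1), bx n β j := by
          rw [Lx_eq (k+1) (by omega)]
          have := (hLs ⟨k, hkn⟩).2.2.1
          rw [show ((⟨k, hkn⟩ : Fin n).succ) = ⟨k+1, by omega⟩ from rfl] at this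
          rw [this, sum_Iic_eq β ⟨k, hkn⟩]
        rw [Finset.sum_range_succ] at h1 h2
        have h3 : ∀ j ∈ Finset.range k, finrank ℂ (l' j) = bx n β j := by
          intro j hj
          rw [hl'lt j (Finset.mem_range.1 hj)]
          exact hrk j (Finset.mem_range.1 hj)
        have h5 : ∑ j ∈ Finset.range k, finrank ℂ (l' j) = ∑ j ∈ Finset.range k, bx n β j :=
          Finset.sum_congr rfl h3
        rw [h5, hl'k] at h1
        rw [h1] at h2
        exact Nat.add_left_cancel h2
      refine ⟨l', ?_, ?_, ?_⟩
      · intro j hj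
        rw [hl', Function.update_of_ne (by omega)]
        exact hjunk j (by omega)
      · intro j hj
        rcases Nat.lt_or_ge j k with h | h
        · rw [hl'lt j h]; exact hrk j h
        · have : j = k := by omega
          subst this
          rw [hl'k]; exact hfinS
      · intro i hi
        rcases Nat.lt_or_ge i (k+1) with h | h
        · rw [hBsame i (by omega)]; exact hker i (by omega)
        · have : i = k + 1 := by omega
          subst this
          exact hkerk1
  obtain ⟨l, hjunk, hrk, hker⟩ := key n le_rfl
  have hfr : ∀ i : Fin n, finrank ℂ (l i.1) = β i := by
    intro i
    rw [hrk i.1 i.2, bx, dif_pos i.2]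
  refine ⟨fun i => ⟨l i.1, hfr i⟩, ?_⟩
  apply Subtype.ext
  funext i
  show LinearMap.ker (Bcomp (extl β fun i => ⟨l i.1, hfr i⟩) i.1) = L i
  have hextl : extl β (fun i : Fin n => (⟨l i.1, hfr i⟩ :
      {a : Submodule ℂ (Em m) // finrank ℂ a = β i})) = l := by
    funext j
    unfold extl
    by_cases h : j < n
    · rw [dif_pos h]
    · rw [dif_neg h]
      exact (hjunk j (by omega)).symm
  rw [hextl, hker i.1 (by omega), Lx_eq i.1 (by omega)]
end

lemma orth_key (a b : Submodule ℂ (Em m)) :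
    LinearMap.ker (Bmap b ∘ₗ Bmap a) ≤ LinearMap.ker (zmap m) ↔ b ≤ aᗮ := by
  constructor
  · intro h v hv
    set x := Amap a (emb0 v) with hx
    have hBa : Bmap a x = emb0 v := by
      have := congrArg (fun T : Vsp m →ₗ[ℂ] Vsp m => T (emb0 v)) (Bmap_Amap a)
      simpa using this
    have hxmem : x ∈ LinearMap.ker (Bmap b ∘ₗ Bmap a) := by
      show Bmap b (Bmap a x) = 0
      rw [hBa]
      have : emb0 v ∈ LinearMap.ker (Bmap b) := by
        rw [ker_Bmap]; exact ⟨v, hv, rfl⟩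
      exact this
    have hz : zmap m x = 0 := h hxmem
    have hx1 : x 1 = 0 := by
      have := congrArg (fun g : Vsp m => g 0) hz
      simpa [zmap_apply] using this
    rw [hx, Amap_apply_succ] at hx1
    rw [emb0_apply, emb0_apply] at hx1
    simp only [if_neg (Nat.one_ne_zero), if_pos rfl, map_zero, sub_zero, zero_sub, zero_add] at hx1
    have : Pm a (toE.symm v) = 0 := by
      rw [← hx1]
      abel
    have h2 := Pm_eq_zero_iff.1 this
    simpa using h2
  · intro h
    rw [ker_comp_eq _ (Amap a) _ (Bmap_Amap a), ker_Bmap, ker_Bmap]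
    apply sup_le
    · rintro x ⟨v, hv, rfl⟩
      rw [LinearMap.mem_ker]
      refine Finsupp.ext fun k => ?_
      rw [zmap_apply, emb0_apply, if_neg (Nat.succ_ne_zero k)]
      rfl
    · rintro x ⟨y, ⟨v, hv, rfl⟩, rfl⟩
      rw [LinearMap.mem_ker]
      refine Finsupp.ext fun k => ?_
      rw [zmap_apply, Amap_apply_succ, emb0_apply, emb0_apply, if_neg (Nat.succ_ne_zero k)]
      cases k with
      | zero =>
        have : Pm a (toE.symm v) = 0 := Pm_eq_zero_iff.2 (by simpa using h hv)
        simp [this]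
      | succ j =>
        simp

lemma map_zmap_ker_iff (l : ℕ → Submodule ℂ (Em m)) (k : ℕ) :
    Submodule.map (zmap m) (LinearMap.ker (Bcomp l (k+2))) ≤ LinearMap.ker (Bcomp l k) ↔
      LinearMap.ker (Bmap (l (k+1)) ∘ₗ Bmap (l k)) ≤ LinearMap.ker (zmap m) := by
  have hcomm : ∀ x : Vsp m, Bcomp l k (zmap m x) = zmap m (Bcomp l k x) := fun x => by
    have := congrArg (fun T : Vsp m →ₗ[ℂ] Vsp m => T x) (zmap_Bcomp l k)
    simpa using this.symm
  constructor
  · intro h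
    rw [← map_Bcomp_ker_two]
    rintro _ ⟨x, hx, rfl⟩
    show zmap m (Bcomp l k x) = 0
    rw [← hcomm]
    exact h ⟨x, hx, rfl⟩
  · intro h
    rintro _ ⟨x, hx, rfl⟩
    show Bcomp l k (zmap m x) = 0
    rw [hcomm]
    apply h
    rw [← map_Bcomp_ker_two]
    exact ⟨x, hx, rfl⟩


end

/-- There is a bijection `Y_β ≃ ∏ᵢ Gr(β_i, ℂ^m)` which, whenever `β_i + β_{i+1} ≤ m`, carries
the subset `X_β^i = {L : z(L_{i+1}) ≤ L_{i-1}}` onto the subset of tuples whose `i`-th and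
`(i+1)`-st members are orthogonal.  (Here the paper's indices `1, …, n` are shifted to the
0-based indices `0, …, n-1` of `Fin n`.) -/
theorem stmt1 (m n : ℕ) (hm : 2 ≤ m) (β : Fin n → ℕ)
    (hβ : ∀ j, 1 ≤ β j ∧ β j ≤ m - 1) :
    ∃ φ : ↥(Yset m n β) ≃
        ((i : Fin n) → {l : Submodule ℂ (EuclideanSpace ℂ (Fin m)) // finrank ℂ l = β i}),
      ∀ (i : ℕ) (hi : i + 1 < n), β ⟨i, by omega⟩ + β ⟨i + 1, hi⟩ ≤ m →
        ∀ L : ↥(Yset m n β),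
          (Submodule.map (zmap m) (L.val ⟨i + 2, by omega⟩) ≤ L.val ⟨i, by omega⟩ ↔
            ((φ L) ⟨i, by omega⟩).val ≤ (((φ L) ⟨i + 1, hi⟩).val)ᗮ) := by
  have hbij : Function.Bijective (psi (m := m) β) := ⟨psi_injective β, psi_surjective β⟩
  refine ⟨(Equiv.ofBijective (psi β) hbij).symm, ?_⟩
  intro i hi _ L
  set l := (Equiv.ofBijective (psi β) hbij).symm L with hl
  have hL : psi β l = L := Equiv.apply_symm_apply (Equiv.ofBijective (psi β) hbij) L
  have hval : L.val = fun j : Fin (n+1) => LinearMap.ker (Bcomp (extl β l) j.1) := by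
    rw [← hL]; rfl
  have h1 : L.val ⟨i + 2, by omega⟩ = LinearMap.ker (Bcomp (extl β l) (i+2)) := by rw [hval]
  have h2 : L.val ⟨i, by omega⟩ = LinearMap.ker (Bcomp (extl β l) i) := by rw [hval]
  rw [h1, h2, map_zmap_ker_iff, orth_key]
  have e1 : extl β l i = (l ⟨i, by omega⟩).val := by
    rw [extl, dif_pos (show i < n by omega)]
  have e2 : extl β l (i+1) = (l ⟨i+1, hi⟩).val := by
    rw [extl, dif_pos (show i+1 < n by omega)]
  rw [e1, e2]
  exact (Submodule.isOrtho_comm (U := (l ⟨i+1, hi⟩).val) (V := (l ⟨i, by omega⟩).val))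
end

section
/- Gaussian elimination for cones: let A : X ⟶ Z, B : Y ⟶ Z, C : X ⟶ W, D : Y ⟶ W be morphisms in 𝒞 with D an isomorphism, and let f : X ⊞ Y ⟶ Z ⊞ W be the morphism with matrix components A, B, C, D (i.e. f = biprod.lift (biprod.desc A B) (biprod.desc C D)). If (X ⊞ Y →^f Z ⊞ W → E → (X ⊞ Y)[1]) is a distinguished triangle and (X →^{A − C ≫ D⁻¹ ≫ B} Z → E' → X[1]) is a distinguished triangle, then E ≅ E'. In other words, Cone(f) ≅ Cone(A − B D⁻¹ C). -/
open CategoryTheory CategoryTheory.Limits CategoryTheory.Pretriangulated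

namespace ConeGauss

variable {𝒞 : Type*} [Category 𝒞] [Preadditive 𝒞] [HasZeroObject 𝒞]
    [HasBinaryBiproducts 𝒞] [HasShift 𝒞 ℤ] [∀ n : ℤ, (shiftFunctor 𝒞 n).Additive]
    [Pretriangulated 𝒞]

noncomputable def biprodPiIso (F : WalkingPair → 𝒞) [HasProduct F] :
    (F WalkingPair.left ⊞ F WalkingPair.right) ≅ ∏ᶜ F where
  hom := Pi.lift (fun j => j.casesOn biprod.fst biprod.snd)
  inv := biprod.lift (Pi.π _ WalkingPair.left) (Pi.π _ WalkingPair.right)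
  hom_inv_id := by
    apply biprod.hom_ext <;> simp
  inv_hom_id := by
    apply Pi.hom_ext
    rintro (_ | _) <;> simp

@[simp] lemma biprodPiIso_hom_π_left (F : WalkingPair → 𝒞) [HasProduct F] :
    (biprodPiIso F).hom ≫ Pi.π F WalkingPair.left = biprod.fst := by simp [biprodPiIso]

@[simp] lemma biprodPiIso_hom_π_right (F : WalkingPair → 𝒞) [HasProduct F] :
    (biprodPiIso F).hom ≫ Pi.π F WalkingPair.right = biprod.snd := by simp [biprodPiIso]

lemma binarySum_distTriang (T₁ T₂ : Triangle 𝒞) (hT₁ : T₁ ∈ distTriang 𝒞)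
    (hT₂ : T₂ ∈ distTriang 𝒞) :
    Triangle.mk (biprod.map T₁.mor₁ T₂.mor₁) (biprod.map T₁.mor₂ T₂.mor₂)
      (biprod.desc (T₁.mor₃ ≫ (shiftFunctor 𝒞 (1 : ℤ)).map biprod.inl)
        (T₂.mor₃ ≫ (shiftFunctor 𝒞 (1 : ℤ)).map biprod.inr)) ∈ distTriang 𝒞 := by
  haveI : HasTerminal 𝒞 := HasZeroObject.hasTerminal
  haveI : HasFiniteProducts 𝒞 := hasFiniteProducts_of_has_binary_and_terminal
  let T : WalkingPair → Triangle 𝒞 := fun j => j.casesOn T₁ T₂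
  have hprod := productTriangle_distinguished T (fun j => by rcases j with _ | _ <;> assumption)
  refine isomorphic_distinguished _ hprod _ ?_
  refine Triangle.isoMk _ _ (biprodPiIso (fun j => (T j).obj₁))
    (biprodPiIso (fun j => (T j).obj₂)) (biprodPiIso (fun j => (T j).obj₃)) ?_ ?_ ?_
  · change biprod.map T₁.mor₁ T₂.mor₁ ≫ (biprodPiIso (fun j => (WalkingPair.casesOn j T₁ T₂ : Triangle 𝒞).obj₂)).hom =
      (biprodPiIso (fun j => (WalkingPair.casesOn j T₁ T₂ : Triangle 𝒞).obj₁)).hom ≫ Limits.Pi.map (fun j => (WalkingPair.casesOn j T₁ T₂ : Triangle 𝒞).mor₁)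
    apply Pi.hom_ext
    rintro (_ | _) <;> simp [T, biprodPiIso]
  · change biprod.map T₁.mor₂ T₂.mor₂ ≫ (biprodPiIso (fun j => (WalkingPair.casesOn j T₁ T₂ : Triangle 𝒞).obj₃)).hom =
      (biprodPiIso (fun j => (WalkingPair.casesOn j T₁ T₂ : Triangle 𝒞).obj₂)).hom ≫ Limits.Pi.map (fun j => (WalkingPair.casesOn j T₁ T₂ : Triangle 𝒞).mor₂)
    apply Pi.hom_ext
    rintro (_ | _) <;> simp [T, biprodPiIso]
  · change biprod.desc (T₁.mor₃ ≫ (shiftFunctor 𝒞 (1 : ℤ)).map biprod.inl)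
        (T₂.mor₃ ≫ (shiftFunctor 𝒞 (1 : ℤ)).map biprod.inr) ≫
        (shiftFunctor 𝒞 (1 : ℤ)).map (biprodPiIso (fun j => (WalkingPair.casesOn j T₁ T₂ : Triangle 𝒞).obj₁)).hom =
      (biprodPiIso (fun j => (WalkingPair.casesOn j T₁ T₂ : Triangle 𝒞).obj₃)).hom ≫ (Limits.Pi.map (fun j => (WalkingPair.casesOn j T₁ T₂ : Triangle 𝒞).mor₃) ≫
        inv (piComparison (shiftFunctor 𝒞 (1 : ℤ)) (fun j => (WalkingPair.casesOn j T₁ T₂ : Triangle 𝒞).obj₁)))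
    rw [← cancel_mono (piComparison (shiftFunctor 𝒞 (1 : ℤ)) (fun j => (T j).obj₁))]
    simp only [Category.assoc, IsIso.inv_hom_id, Category.comp_id]
    apply Pi.hom_ext
    rintro (_ | _) <;>
      simp [T, biprodPiIso, piComparison_comp_π, ← Functor.map_comp] <;>
      apply biprod.hom_ext' <;> simp [biprodPiIso, ← Functor.map_comp]

end ConeGauss


open ConeGauss ZeroObject in
/-- Gaussian elimination for cones: if `f : X ⊞ Y ⟶ Z ⊞ W` has matrix components
`A, B, C, D` with `D` an isomorphism, then any cone of `f` is isomorphic to any cone of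
`A - C ≫ D⁻¹ ≫ B : X ⟶ Z`. -/
theorem stmt2 {𝒞 : Type*} [Category 𝒞] [Preadditive 𝒞] [HasZeroObject 𝒞]
    [HasBinaryBiproducts 𝒞] [HasShift 𝒞 ℤ] [∀ n : ℤ, (shiftFunctor 𝒞 n).Additive]
    [Pretriangulated 𝒞]
    {X Y Z W E E' : 𝒞} (A : X ⟶ Z) (B : Y ⟶ Z) (C : X ⟶ W) (D : Y ⟶ W) [IsIso D]
    (g : Z ⊞ W ⟶ E) (h : E ⟶ (X ⊞ Y)⟦(1 : ℤ)⟧)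
    (hT : Triangle.mk (biprod.lift (biprod.desc A B) (biprod.desc C D)) g h ∈ distTriang 𝒞)
    (g' : Z ⟶ E') (h' : E' ⟶ X⟦(1 : ℤ)⟧)
    (hT' : Triangle.mk (A - C ≫ inv D ≫ B) g' h' ∈ distTriang 𝒞) :
    Nonempty (E ≅ E') := by
  set A' : X ⟶ Z := A - C ≫ inv D ≫ B with hA'
  -- the triangle on D with zero cone
  have hTD : Triangle.mk D (0 : W ⟶ (0 : 𝒞)) (0 : (0 : 𝒞) ⟶ Y⟦(1 : ℤ)⟧) ∈ distTriang 𝒞 := by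
    refine isomorphic_distinguished _ (contractible_distinguished W) _ ?_
    exact Triangle.isoMk _ _ (asIso D : Y ≅ W) (Iso.refl _) (Iso.refl _) (by rfl)
      ((isZero_zero 𝒞).eq_of_tgt _ _) ((isZero_zero 𝒞).eq_of_src _ _)
  -- the binary sum triangle
  have hS := binarySum_distTriang _ _ hT' hTD
  -- the isos for Gaussian elimination
  let e₁ : X ⊞ Y ≅ X ⊞ Y :=
    { hom := 𝟙 _ - biprod.fst ≫ (C ≫ inv D) ≫ biprod.inr
      inv := 𝟙 _ + biprod.fst ≫ (C ≫ inv D) ≫ biprod.inr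
      hom_inv_id := by
        simp [Preadditive.comp_add, Preadditive.add_comp, Preadditive.sub_comp, Preadditive.comp_sub]
      inv_hom_id := by
        simp [Preadditive.comp_add, Preadditive.add_comp, Preadditive.sub_comp, Preadditive.comp_sub] }
  let e₂ : Z ⊞ W ≅ Z ⊞ W :=
    { hom := 𝟙 _ + biprod.snd ≫ (inv D ≫ B) ≫ biprod.inl
      inv := 𝟙 _ - biprod.snd ≫ (inv D ≫ B) ≫ biprod.inl
      hom_inv_id := by
        simp [Preadditive.comp_add, Preadditive.add_comp, Preadditive.sub_comp, Preadditive.comp_sub]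
      inv_hom_id := by
        simp [Preadditive.comp_add, Preadditive.add_comp, Preadditive.sub_comp, Preadditive.comp_sub] }
  have comm : (biprod.map A' D) ≫ e₂.hom =
      e₁.hom ≫ biprod.lift (biprod.desc A B) (biprod.desc C D) := by
    dsimp [e₁, e₂]
    apply biprod.hom_ext' <;> apply biprod.hom_ext <;>
      simp [hA', Preadditive.comp_add, Preadditive.add_comp, Preadditive.sub_comp, Preadditive.comp_sub] <;> abel
  have eiso := isoTriangleOfIso₁₂ _ _ hS hT e₁ e₂ comm
  exact ⟨((isoBiprodZero (isZero_zero 𝒞)).trans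
    ((Triangle.π₃ : Triangle 𝒞 ⥤ 𝒞).mapIso eiso)).symm⟩
end
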